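/- Let K be a field of characteristic zero, G a finite group, M ≤ G abelian with |M̂| = |M|, ω a normalized 2-cocycle on M̂, and τ ∈ G. Let {(m_i, m'_i)}_{i=1}^r be a complete set of coset representatives of the subgroup (Rad_τ)^⊥ in M × M. Then in the group algebra K G: Σ_{i=1}^r Σ_{(φ,ψ)∈Rad_τ} φ(m_i)·ψ(m'_i)·e_φ^M·τ·e_ψ^M = |Rad_τ|·e_ε^M·τ·e_ε^M. -/

import Mathlib

open scoped TensorProduct BigOperators
open MonoidAlgebra

noncomputable section

variable (K : Type) [Field K] {G : Type} [Group G]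

/-- The primitive idempotent `e_φ^M ∈ K M ⊆ K G` attached to a character `φ` of a subgroup
`M` of `G`. -/
def idem (M : Subgroup G) (φ : ↥M →* Kˣ) : MonoidAlgebra K G :=
  (Nat.card M : K)⁻¹ • ∑ᶠ m : ↥M, ((φ m⁻¹ : Kˣ) : K) • MonoidAlgebra.of K G (m : G)

/-- `N_τ = {(φ,ψ) ∈ M̂ × M̂ : ψ(m) = φ(τ⁻¹mτ) for all m ∈ M ∩ τMτ⁻¹}`. -/
def Ntau (M : Subgroup G) (τ : G) : Set ((↥M →* Kˣ) × (↥M →* Kˣ)) :=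
  {p | ∀ (m : G) (hm : m ∈ M) (hm' : τ⁻¹ * m * τ ∈ M),
    p.2 ⟨m, hm⟩ = p.1 ⟨τ⁻¹ * m * τ, hm'⟩}

/-- The `2`-cocycle `(ω,ω⁻¹)` on `M̂ × M̂`. -/
def pairCocycle (M : Subgroup G) (ω : (↥M →* Kˣ) → (↥M →* Kˣ) → Kˣ)
    (x y : (↥M →* Kˣ) × (↥M →* Kˣ)) : Kˣ :=
  ω x.1 y.1 * (ω x.2 y.2)⁻¹

/-- `Rad_τ`, the radical of the restriction of `(ω,ω⁻¹)` to `N_τ`. -/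
def Radtau (M : Subgroup G) (ω : (↥M →* Kˣ) → (↥M →* Kˣ) → Kˣ) (τ : G) :
    Set ((↥M →* Kˣ) × (↥M →* Kˣ)) :=
  {x ∈ Ntau K M τ | ∀ y ∈ Ntau K M τ, pairCocycle K M ω x y = pairCocycle K M ω y x}

/-- `(Rad_τ)^⊥ = {(m,m') ∈ M × M : φ(m)·ψ(m') = 1 for all (φ,ψ) ∈ Rad_τ}`. -/
def RadtauPerp (M : Subgroup G) (ω : (↥M →* Kˣ) → (↥M →* Kˣ) → Kˣ) (τ : G) :
    Set (↥M × ↥M) :=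
  {q | ∀ p ∈ Radtau K M ω τ, p.1 q.1 * p.2 q.2 = 1}

/-! ### Auxiliary definitions and lemmas -/

/-- The pairing between `M̂ × M̂` and `M × M`, valued in `K`. -/
def pairK (M : Subgroup G) (p : (↥M →* Kˣ) × (↥M →* Kˣ)) (q : ↥M × ↥M) : K :=
  ((p.1 q.1 : Kˣ) : K) * ((p.2 q.2 : Kˣ) : K)

variable {K}

lemma grp_mul_left_cancel {H : Type} [Group H] {p a b : H} (h : p * a = p * b) : a = b := by
  have h2 := congrArg (fun z => p⁻¹ * z) h
  simpa [← mul_assoc] using h2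

lemma grp_mul_right_cancel {H : Type} [Group H] {p a b : H} (h : a * p = b * p) : a = b := by
  have h2 := congrArg (fun z => z * p⁻¹) h
  simpa [mul_assoc] using h2

lemma pair_mul_helper (a b c d a' b' c' d' : Kˣ) (h1 : a * c = a' * c') (h2 : b * d = b' * d') :
    a * b⁻¹ * (c * d⁻¹) = a' * b'⁻¹ * (c' * d'⁻¹) := by
  rw [mul_mul_mul_comm, mul_mul_mul_comm a', ← mul_inv, ← mul_inv, h1, h2]

lemma pc_cocycle (M : Subgroup G) (ω : (↥M →* Kˣ) → (↥M →* Kˣ) → Kˣ)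
    (hcocycle : ∀ φ ψ χ : ↥M →* Kˣ, ω φ ψ * ω (φ * ψ) χ = ω ψ χ * ω φ (ψ * χ))
    (x y z : (↥M →* Kˣ) × (↥M →* Kˣ)) :
    pairCocycle K M ω x y * pairCocycle K M ω (x * y) z
      = pairCocycle K M ω y z * pairCocycle K M ω x (y * z) := by
  simp only [pairCocycle, Prod.fst_mul, Prod.snd_mul]
  exact pair_mul_helper _ _ _ _ _ _ _ _ (hcocycle x.1 y.1 z.1) (hcocycle x.2 y.2 z.2)

lemma one_mem_Radtau (M : Subgroup G) (ω : (↥M →* Kˣ) → (↥M →* Kˣ) → Kˣ)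
    (hnormal : ∀ φ : ↥M →* Kˣ, ω φ 1 = 1 ∧ ω 1 φ = 1) (τ : G) :
    (1 : (↥M →* Kˣ) × (↥M →* Kˣ)) ∈ Radtau K M ω τ := by
  constructor
  · intro m hm hm'
    simp [Ntau]
  · intro w hw
    simp [pairCocycle, (hnormal w.1).1, (hnormal w.1).2, (hnormal w.2).1, (hnormal w.2).2]

lemma mul_mem_Radtau (M : Subgroup G) (ω : (↥M →* Kˣ) → (↥M →* Kˣ) → Kˣ)
    (hcocycle : ∀ φ ψ χ : ↥M →* Kˣ, ω φ ψ * ω (φ * ψ) χ = ω ψ χ * ω φ (ψ * χ)) (τ : G)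
    {x y : (↥M →* Kˣ) × (↥M →* Kˣ)}
    (hx : x ∈ Radtau K M ω τ) (hy : y ∈ Radtau K M ω τ) : x * y ∈ Radtau K M ω τ := by
  obtain ⟨hxN, hxS⟩ := hx
  obtain ⟨hyN, hyS⟩ := hy
  constructor
  · intro m hm hm'
    simp only [Prod.snd_mul, Prod.fst_mul, MonoidHom.mul_apply]
    rw [hxN m hm hm', hyN m hm hm']
  · intro w hw
    have h : pairCocycle K M ω x y * pairCocycle K M ω (x * y) w
        = pairCocycle K M ω x y * pairCocycle K M ω w (x * y) := by
      rw [pc_cocycle M ω hcocycle x y w, ← pc_cocycle M ω hcocycle w x y,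
        mul_comm y w, mul_comm w x, hyS w hw, ← pc_cocycle M ω hcocycle x w y, hxS w hw]
    exact grp_mul_left_cancel h

lemma sum_char_eq_zero (M : Subgroup G) [Fintype ↥M] (φ : ↥M →* Kˣ) (hφ : φ ≠ 1) :
    ∑ m : ↥M, ((φ m : Kˣ) : K) = 0 := by
  obtain ⟨m0, hm0⟩ : ∃ m0 : ↥M, φ m0 ≠ 1 := by
    by_contra h
    push_neg at h
    exact hφ (MonoidHom.ext fun m => h m)
  have htrans : ∑ m : ↥M, ((φ (m0 * m) : Kˣ) : K) = ∑ m : ↥M, ((φ m : Kˣ) : K) :=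
    Fintype.sum_bijective (fun m => m0 * m) (Group.mulLeft_bijective m0)
      (fun m => ((φ (m0 * m) : Kˣ) : K)) (fun m => ((φ m : Kˣ) : K)) (fun m => rfl)
  have h2 : (((φ m0 : Kˣ) : K) - 1) * ∑ m : ↥M, ((φ m : Kˣ) : K) = 0 := by
    rw [sub_mul, one_mul, Finset.mul_sum, sub_eq_zero]
    calc ∑ m : ↥M, ((φ m0 : Kˣ) : K) * ((φ m : Kˣ) : K)
        = ∑ m : ↥M, ((φ (m0 * m) : Kˣ) : K) := by
          refine Finset.sum_congr rfl fun m _ => ?_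
          rw [map_mul, Units.val_mul]
      _ = ∑ m : ↥M, ((φ m : Kˣ) : K) := htrans
  rcases mul_eq_zero.mp h2 with h | h
  · exfalso
    apply hm0
    have h1 : ((φ m0 : Kˣ) : K) = 1 := by simpa using sub_eq_zero.mp h
    exact Units.ext (by simpa using h1)
  · exact h

lemma pairK_mul_left (M : Subgroup G) (p p' : (↥M →* Kˣ) × (↥M →* Kˣ)) (q : ↥M × ↥M) :
    pairK K M (p * p') q = pairK K M p q * pairK K M p' q := by
  simp only [pairK, Prod.fst_mul, Prod.snd_mul, MonoidHom.mul_apply, Units.val_mul]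
  ring

lemma pairK_mul_right (M : Subgroup G) (p : (↥M →* Kˣ) × (↥M →* Kˣ)) (q q' : ↥M × ↥M) :
    pairK K M p (q * q') = pairK K M p q * pairK K M p q' := by
  simp only [pairK, Prod.fst_mul, Prod.snd_mul, map_mul, Units.val_mul]
  ring

lemma pairK_one_left (M : Subgroup G) (q : ↥M × ↥M) : pairK K M 1 q = 1 := by
  simp [pairK]

lemma pairK_perp (M : Subgroup G) (ω : (↥M →* Kˣ) → (↥M →* Kˣ) → Kˣ) (τ : G)
    {p : (↥M →* Kˣ) × (↥M →* Kˣ)} {q : ↥M × ↥M}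
    (hp : p ∈ Radtau K M ω τ) (hq : q ∈ RadtauPerp K M ω τ) : pairK K M p q = 1 := by
  have h := hq p hp
  rw [pairK, ← Units.val_mul, h, Units.val_one]

lemma pairK_sum_q (M : Subgroup G) [Fintype ↥M]
    {p : (↥M →* Kˣ) × (↥M →* Kˣ)} (hp : p ≠ 1) :
    ∑ q : ↥M × ↥M, pairK K M p q = 0 := by
  obtain ⟨p1, p2⟩ := p
  have hfac : ∑ q : ↥M × ↥M, pairK K M (p1, p2) q
      = (∑ a : ↥M, ((p1 a : Kˣ) : K)) * (∑ b : ↥M, ((p2 b : Kˣ) : K)) := by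
    rw [Fintype.sum_prod_type, Finset.sum_mul_sum]
    rfl
  rw [hfac]
  have : p1 ≠ 1 ∨ p2 ≠ 1 := by
    by_contra h
    push_neg at h
    exact hp (Prod.mk_eq_one.mpr ⟨h.1, h.2⟩)
  rcases this with h | h
  · rw [sum_char_eq_zero M p1 h, zero_mul]
  · rw [sum_char_eq_zero M p2 h, mul_zero]

lemma trans_zero (M : Subgroup G) (ω : (↥M →* Kˣ) → (↥M →* Kˣ) → Kˣ)
    (hcocycle : ∀ φ ψ χ : ↥M →* Kˣ, ω φ ψ * ω (φ * ψ) χ = ω ψ χ * ω φ (ψ * χ)) (τ : G)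
    (RF : Finset ((↥M →* Kˣ) × (↥M →* Kˣ)))
    (hRF : ∀ p, p ∈ RF ↔ p ∈ Radtau K M ω τ)
    (q : ↥M × ↥M) (hq : q ∉ RadtauPerp K M ω τ) :
    ∑ p ∈ RF, pairK K M p q = 0 := by
  classical
  obtain ⟨p0, hp0, hne⟩ : ∃ p0 ∈ Radtau K M ω τ, p0.1 q.1 * p0.2 q.2 ≠ 1 := by
    simp only [RadtauPerp, Set.mem_setOf_eq] at hq
    push_neg at hq
    exact hq
  have hc0 : pairK K M p0 q ≠ 1 := by
    intro h
    apply hne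
    apply Units.ext
    rw [Units.val_mul, Units.val_one]
    exact h
  set emb : ((↥M →* Kˣ) × (↥M →* Kˣ)) ↪ ((↥M →* Kˣ) × (↥M →* Kˣ)) :=
    ⟨fun p => p0 * p, fun a b hab => by
      exact grp_mul_left_cancel hab⟩ with hemb
  have hsub : RF.map emb ⊆ RF := by
    intro x hx
    rw [Finset.mem_map] at hx
    obtain ⟨p, hp, rfl⟩ := hx
    rw [hRF] at hp ⊢
    exact mul_mem_Radtau M ω hcocycle τ hp0 hp
  have hmap : RF.map emb = RF :=
    Finset.eq_of_subset_of_card_le hsub (by rw [Finset.card_map])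
  have hS : ∑ p ∈ RF, pairK K M p q = pairK K M p0 q * ∑ p ∈ RF, pairK K M p q := by
    conv_lhs => rw [← hmap, Finset.sum_map]
    simp only [hemb, Function.Embedding.coeFn_mk, pairK_mul_left]
    show ∑ x ∈ RF, pairK K M (p0 * x) q = _
    simp only [pairK_mul_left]
    rw [← Finset.mul_sum]
  have h2 : (pairK K M p0 q - 1) * ∑ p ∈ RF, pairK K M p q = 0 := by
    rw [sub_mul, one_mul, ← hS, sub_self]
  rcases mul_eq_zero.mp h2 with h | h
  · exact absurd (by simpa using sub_eq_zero.mp h) hc0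
  · exact h

lemma partition_sum (M : Subgroup G) (ω : (↥M →* Kˣ) → (↥M →* Kˣ) → Kˣ) (τ : G)
    [Fintype (↥M × ↥M)] [Fintype ↥(RadtauPerp K M ω τ)]
    (r : ℕ) (rep : Fin r → ↥M × ↥M)
    (hrep : ∀ x : ↥M × ↥M, ∃! i : Fin r, x * (rep i)⁻¹ ∈ RadtauPerp K M ω τ)
    {β : Type} [AddCommMonoid β] (f : ↥M × ↥M → β) :
    ∑ q : ↥M × ↥M, f q
      = ∑ i : Fin r, ∑ h : ↥(RadtauPerp K M ω τ), f ((h : ↥M × ↥M) * rep i) := by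
  have he : Function.Bijective
      (fun x : Fin r × ↥(RadtauPerp K M ω τ) => (x.2 : ↥M × ↥M) * rep x.1) := by
    constructor
    · rintro ⟨i, h⟩ ⟨j, g⟩ hx
      simp only at hx
      have hi : ((h : ↥M × ↥M) * rep i) * (rep i)⁻¹ ∈ RadtauPerp K M ω τ := by
        simpa using h.2
      have hj : ((h : ↥M × ↥M) * rep i) * (rep j)⁻¹ ∈ RadtauPerp K M ω τ := by
        rw [hx]
        simpa using g.2
      have hij : i = j := ((hrep ((h : ↥M × ↥M) * rep i)).unique hi hj)
      subst hij
      have hhg : (h : ↥M × ↥M) = g := grp_mul_right_cancel hx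
      exact Prod.ext rfl (Subtype.ext hhg)
    · intro x
      obtain ⟨i, hi, -⟩ := hrep x
      exact ⟨⟨i, ⟨x * (rep i)⁻¹, hi⟩⟩, by simp⟩
  calc ∑ q : ↥M × ↥M, f q
      = ∑ x : Fin r × ↥(RadtauPerp K M ω τ), f ((x.2 : ↥M × ↥M) * rep x.1) :=
        (Fintype.sum_bijective _ he _ f (fun _ => rfl)).symm
    _ = ∑ i : Fin r, ∑ h : ↥(RadtauPerp K M ω τ), f ((h : ↥M × ↥M) * rep i) := by
        rw [Fintype.sum_prod_type]

variable (K)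

/-- Let `K` be a field of characteristic zero, `G` a finite group, `M ≤ G` abelian with
`|M̂| = |M|`, `ω` a normalized `2`-cocycle on `M̂`, and `τ ∈ G`.  Let `{(m_i,m'_i)}_{i=1}^r`
be a complete set of coset representatives of the subgroup `(Rad_τ)^⊥` in `M × M`.  Then in
the group algebra `K G`:
`Σ_{i=1}^r Σ_{(φ,ψ)∈Rad_τ} φ(m_i)·ψ(m'_i)·e_φ^M·τ·e_ψ^M = |Rad_τ|·e_ε^M·τ·e_ε^M`. -/
theorem stmt9 [CharZero K] [Finite G] (M : Subgroup G)
    (habelian : ∀ x ∈ M, ∀ y ∈ M, x * y = y * x)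
    (hM : Nat.card (↥M →* Kˣ) = Nat.card M)
    (ω : (↥M →* Kˣ) → (↥M →* Kˣ) → Kˣ)
    (hcocycle : ∀ φ ψ χ : ↥M →* Kˣ, ω φ ψ * ω (φ * ψ) χ = ω ψ χ * ω φ (ψ * χ))
    (hnormal : ∀ φ : ↥M →* Kˣ, ω φ 1 = 1 ∧ ω 1 φ = 1)
    (τ : G) (r : ℕ) (rep : Fin r → ↥M × ↥M)
    (hrep : ∀ x : ↥M × ↥M, ∃! i : Fin r, x * (rep i)⁻¹ ∈ RadtauPerp K M ω τ) :
    ∑ i : Fin r, ∑ᶠ p ∈ Radtau K M ω τ,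
        (((Prod.fst p (rep i).1 : Kˣ) : K) * ((Prod.snd p (rep i).2 : Kˣ) : K)) •
          (idem K M (Prod.fst p) * MonoidAlgebra.of K G τ * idem K M (Prod.snd p)) =
      (Nat.card (Radtau K M ω τ) : K) •
        (idem K M (1 : ↥M →* Kˣ) * MonoidAlgebra.of K G τ * idem K M (1 : ↥M →* Kˣ)) := by
  classical
  haveI : Fintype ↥M := Fintype.ofFinite _
  haveI hfin1 : Finite (↥M →* Kˣ) :=
    Nat.finite_of_card_ne_zero (by rw [hM]; exact Nat.card_pos.ne')
  haveI : Fintype ((↥M →* Kˣ) × (↥M →* Kˣ)) := Fintype.ofFinite _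
  haveI instPerp : Fintype ↥(RadtauPerp K M ω τ) := Fintype.ofFinite _
  haveI instRad : Fintype ↥(Radtau K M ω τ) := Fintype.ofFinite _
  set RF : Finset ((↥M →* Kˣ) × (↥M →* Kˣ)) := (Radtau K M ω τ).toFinset with hRFdef
  have hRF : ∀ p, p ∈ RF ↔ p ∈ Radtau K M ω τ := fun p => Set.mem_toFinset
  have h1RS : (1 : (↥M →* Kˣ) × (↥M →* Kˣ)) ∈ Radtau K M ω τ := one_mem_Radtau M ω hnormal τ
  have h1RF : (1 : (↥M →* Kˣ) × (↥M →* Kˣ)) ∈ RF := (hRF 1).mpr h1RS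
  have h1Perp : (1 : ↥M × ↥M) ∈ RadtauPerp K M ω τ := by
    intro p hp
    simp
  haveI : Nonempty ↥(RadtauPerp K M ω τ) := ⟨⟨1, h1Perp⟩⟩
  have hcardPerp : ((Fintype.card ↥(RadtauPerp K M ω τ) : K)) ≠ 0 :=
    Nat.cast_ne_zero.mpr Fintype.card_ne_zero
  -- Step A : the coefficient sums
  have hA : ∀ p ∈ RF, (∑ i : Fin r, pairK K M p (rep i)) = if p = 1 then (r : K) else 0 := by
    intro p hp
    by_cases h1 : p = 1
    · subst h1
      simp [pairK_one_left]
    · rw [if_neg h1]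
      have h0 : ∑ q : ↥M × ↥M, pairK K M p q = 0 := pairK_sum_q M h1
      rw [partition_sum M ω τ r rep hrep] at h0
      have heq : ∀ i : Fin r, ∑ h : ↥(RadtauPerp K M ω τ), pairK K M p ((h : ↥M × ↥M) * rep i)
          = (Fintype.card ↥(RadtauPerp K M ω τ) : K) * pairK K M p (rep i) := by
        intro i
        calc ∑ h : ↥(RadtauPerp K M ω τ), pairK K M p ((h : ↥M × ↥M) * rep i)
            = ∑ _h : ↥(RadtauPerp K M ω τ), pairK K M p (rep i) :=
              Finset.sum_congr rfl fun h _ => by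
                rw [pairK_mul_right, pairK_perp M ω τ ((hRF p).mp hp) h.2, one_mul]
          _ = (Fintype.card ↥(RadtauPerp K M ω τ) : K) * pairK K M p (rep i) := by
              rw [Finset.sum_const, Finset.card_univ, nsmul_eq_mul]
      simp only [heq] at h0
      rw [← Finset.mul_sum] at h0
      exact (mul_eq_zero.mp h0).resolve_left hcardPerp
  -- value of the `p`-sum at each `q`
  have hW1 : ∀ q : ↥M × ↥M, ∑ p ∈ RF, pairK K M p q
      = if q ∈ RadtauPerp K M ω τ then (RF.card : K) else 0 := by
    intro q
    by_cases hq : q ∈ RadtauPerp K M ω τ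
    · rw [if_pos hq]
      calc ∑ p ∈ RF, pairK K M p q = ∑ _p ∈ RF, (1 : K) :=
            Finset.sum_congr rfl fun p hp => pairK_perp M ω τ ((hRF p).mp hp) hq
        _ = (RF.card : K) := by rw [Finset.sum_const, nsmul_eq_mul, mul_one]
    · rw [if_neg hq]
      exact trans_zero M ω hcocycle τ RF hRF q hq
  -- two evaluations of the double sum give `|Rad| = r` in `K`
  have hB : (RF.card : K) = (r : K) := by
    have hway1 : ∑ q : ↥M × ↥M, ∑ p ∈ RF, pairK K M p q
        = (Fintype.card ↥(RadtauPerp K M ω τ) : K) * (RF.card : K) := by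
      simp only [hW1]
      rw [← Finset.sum_filter,
        show Finset.filter (fun q => q ∈ RadtauPerp K M ω τ) Finset.univ
            = (RadtauPerp K M ω τ).toFinset from by ext q; simp,
        Finset.sum_const, Set.toFinset_card, nsmul_eq_mul]
    have hway2 : ∑ q : ↥M × ↥M, ∑ p ∈ RF, pairK K M p q
        = (Fintype.card ↥(RadtauPerp K M ω τ) : K) * (r : K) := by
      rw [partition_sum M ω τ r rep hrep (fun q => ∑ p ∈ RF, pairK K M p q)]
      have hconst : ∀ (i : Fin r) (h : ↥(RadtauPerp K M ω τ)),
          ∑ p ∈ RF, pairK K M p ((h : ↥M × ↥M) * rep i) = ∑ p ∈ RF, pairK K M p (rep i) := by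
        intro i h
        refine Finset.sum_congr rfl fun p hp => ?_
        rw [pairK_mul_right, pairK_perp M ω τ ((hRF p).mp hp) h.2, one_mul]
      calc ∑ i : Fin r, ∑ h : ↥(RadtauPerp K M ω τ), ∑ p ∈ RF,
              pairK K M p ((h : ↥M × ↥M) * rep i)
          = ∑ i : Fin r, (Fintype.card ↥(RadtauPerp K M ω τ) : K) *
              ∑ p ∈ RF, pairK K M p (rep i) := by
            refine Finset.sum_congr rfl fun i _ => ?_
            exact (Finset.sum_congr rfl fun h _ => hconst i h).trans
              (by rw [Finset.sum_const, Finset.card_univ, nsmul_eq_mul])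
        _ = (Fintype.card ↥(RadtauPerp K M ω τ) : K) *
              ∑ i : Fin r, ∑ p ∈ RF, pairK K M p (rep i) := by rw [← Finset.mul_sum]
        _ = (Fintype.card ↥(RadtauPerp K M ω τ) : K) * (r : K) := by
            congr 1
            rw [Finset.sum_comm]
            calc ∑ p ∈ RF, ∑ i : Fin r, pairK K M p (rep i)
                = ∑ p ∈ RF, (if p = 1 then (r : K) else 0) :=
                  Finset.sum_congr rfl fun p hp => hA p hp
              _ = (r : K) := by
                  rw [Finset.sum_ite_eq' RF 1 (fun _ => (r : K)), if_pos h1RF]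
    exact mul_left_cancel₀ hcardPerp (hway1.symm.trans hway2)
  have hcard2 : ((Nat.card ↥(Radtau K M ω τ) : ℕ) : K) = (RF.card : K) := by
    rw [Nat.card_eq_fintype_card, hRFdef, Set.toFinset_card]
  -- final computation
  calc ∑ i : Fin r, ∑ᶠ p ∈ Radtau K M ω τ,
        (((Prod.fst p (rep i).1 : Kˣ) : K) * ((Prod.snd p (rep i).2 : Kˣ) : K)) •
          (idem K M (Prod.fst p) * MonoidAlgebra.of K G τ * idem K M (Prod.snd p))
      = ∑ i : Fin r, ∑ p ∈ RF, pairK K M p (rep i) •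
          (idem K M p.1 * MonoidAlgebra.of K G τ * idem K M p.2) := by
        refine Finset.sum_congr rfl fun i _ => ?_
        rw [← Set.coe_toFinset (Radtau K M ω τ), finsum_mem_coe_finset, hRFdef]
        rfl
    _ = ∑ p ∈ RF, ∑ i : Fin r, pairK K M p (rep i) •
          (idem K M p.1 * MonoidAlgebra.of K G τ * idem K M p.2) := Finset.sum_comm
    _ = ∑ p ∈ RF, (∑ i : Fin r, pairK K M p (rep i)) •
          (idem K M p.1 * MonoidAlgebra.of K G τ * idem K M p.2) :=
        Finset.sum_congr rfl fun p _ => (Finset.sum_smul).symm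
    _ = ∑ p ∈ RF, (if p = 1 then (r : K) else 0) •
          (idem K M p.1 * MonoidAlgebra.of K G τ * idem K M p.2) :=
        Finset.sum_congr rfl fun p hp => by rw [hA p hp]
    _ = ∑ p ∈ RF, (if p = 1 then (r : K) •
          (idem K M p.1 * MonoidAlgebra.of K G τ * idem K M p.2) else 0) :=
        Finset.sum_congr rfl fun p _ => by rw [ite_smul, zero_smul]
    _ = (r : K) • (idem K M (1 : (↥M →* Kˣ) × (↥M →* Kˣ)).1 * MonoidAlgebra.of K G τ *
          idem K M (1 : (↥M →* Kˣ) × (↥M →* Kˣ)).2) := by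
        rw [Finset.sum_ite_eq' RF 1
          (fun p => (r : K) • (idem K M p.1 * MonoidAlgebra.of K G τ * idem K M p.2)),
          if_pos h1RF]
    _ = (Nat.card (Radtau K M ω τ) : K) •
        (idem K M (1 : ↥M →* Kˣ) * MonoidAlgebra.of K G τ * idem K M (1 : ↥M →* Kˣ)) := by
        rw [Prod.fst_one, Prod.snd_one, hcard2, hB]

end
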